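/- One-to-one correspondence between grounding derivations and grounding trees: for every grounding derivation d there is exactly one grounding tree that corresponds to d, and for every grounding tree t there is at most one grounding derivation that corresponds to t. -/
import Mathlib


inductive DTree (α : Type*) : Type _ where
  | leaf (a : α)
  | node (a : α) (gchildren cchildren : List (DTree α))

namespace DTree
variable {α : Type*}

def label : DTree α → α
  | .leaf a => a
  | .node a _ _ => a

def isLeaf : DTree α → Prop
  | .leaf _ => True
  | .node _ _ _ => False

end DTree

inductive DValid {α : Type*} (R : List α → List α → α → Prop) : DTree α → Prop where
  | leaf (a : α) : DValid R (.leaf a)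
  | node (a : α) (gs cs : List (DTree α)) :
      R (gs.map DTree.label) (cs.map DTree.label) a →
      (∀ t ∈ gs, DValid R t) → (∀ t ∈ cs, DValid R t) →
      DValid R (.node a gs cs)

/-- A grounding derivation for the immediate grounding relation `R`. -/
structure GDeriv {α : Type*} (R : List α → List α → α → Prop) where
  tree : DTree α
  valid : DValid R tree
  nonleaf : ¬ tree.isLeaf

inductive GTree (α : Type*) : Type _ where
  | mk (grounds : List (α ⊕ GTree α)) (conds : List (α ⊕ GTree α)) (concl : α)

namespace GTree
variable {α : Type*}

def concl : GTree α → α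
  | .mk _ _ b => b

end GTree

universe u

mutual
/-- Correspondence between grounding trees and grounding derivations. -/
inductive Corr {α : Type u} : GTree α → DTree α → Prop where
  | mk {G C : List (α ⊕ GTree α)} {B : α} {gs cs : List (DTree α)} :
      CorrList G gs → CorrList C cs → Corr (.mk G C B) (.node B gs cs)

/-- Entry-by-entry correspondence between a list of grounding-tree entries and a list
of child subderivations: a plain entry `Sum.inl a` matches a leaf labelled `a`, and a
subtree entry `Sum.inr s` matches a non-leaf child whose subderivation corresponds to `s`. -/
inductive CorrList {α : Type u} : List (α ⊕ GTree α) → List (DTree α) → Prop where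
  | nil : CorrList [] []
  | consFm {a : α} {G : List (α ⊕ GTree α)} {gs : List (DTree α)} :
      CorrList G gs → CorrList (Sum.inl a :: G) (DTree.leaf a :: gs)
  | consTr {s : GTree α} {t : DTree α} {G : List (α ⊕ GTree α)} {gs : List (DTree α)} :
      Corr s t → ¬ t.isLeaf → CorrList G gs → CorrList (Sum.inr s :: G) (t :: gs)
end

namespace CorrAux
variable {α : Type u}

mutual
def toG : DTree α → GTree α
  | .leaf a => .mk [] [] a
  | .node a gs cs => .mk (toGL gs) (toGL cs) a
def toGL : List (DTree α) → List (α ⊕ GTree α)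
  | [] => []
  | .leaf a :: ts => .inl a :: toGL ts
  | .node a gs cs :: ts => .inr (toG (.node a gs cs)) :: toGL ts
end

mutual
theorem corr_toG : ∀ (d : DTree α), ¬ d.isLeaf → Corr (toG d) d
  | .leaf _, h => absurd trivial h
  | .node a gs cs, _ => by
      rw [toG]
      exact Corr.mk (corrList_toGL gs) (corrList_toGL cs)
theorem corrList_toGL : ∀ (ts : List (DTree α)), CorrList (toGL ts) ts
  | [] => CorrList.nil
  | .leaf a :: ts => by rw [toGL]; exact CorrList.consFm (corrList_toGL ts)
  | .node a gs cs :: ts => by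
      rw [toGL]
      exact CorrList.consTr (corr_toG _ (fun h => h)) (fun h => h) (corrList_toGL ts)
end

mutual
theorem uniqL : ∀ {d : DTree α} {t t' : GTree α}, Corr t d → Corr t' d → t = t'
  | .node _ gs cs, _, _, Corr.mk hG hC, Corr.mk hG' hC' => by
      rw [uniqL_list hG hG', uniqL_list hC hC']
theorem uniqL_list : ∀ {ds : List (DTree α)} {G G' : List (α ⊕ GTree α)},
    CorrList G ds → CorrList G' ds → G = G'
  | [], _, _, CorrList.nil, CorrList.nil => rfl
  | .leaf _ :: _, _, _, CorrList.consFm h, CorrList.consFm h' => by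
      rw [uniqL_list h h']
  | .leaf _ :: _, _, _, CorrList.consFm _, CorrList.consTr _ hn _ => absurd trivial hn
  | .leaf _ :: _, _, _, CorrList.consTr _ hn _, _ => absurd trivial hn
  | .node _ _ _ :: _, _, _, CorrList.consTr hc _ h, CorrList.consTr hc' _ h' => by
      rw [uniqL hc hc', uniqL_list h h']
end

mutual
theorem uniqR : ∀ {t : GTree α} {d d' : DTree α}, Corr t d → Corr t d' → d = d'
  | .mk G C B, _, _, Corr.mk hG hC, Corr.mk hG' hC' => by
      rw [uniqR_list hG hG', uniqR_list hC hC']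
theorem uniqR_list : ∀ {G : List (α ⊕ GTree α)} {ds ds' : List (DTree α)},
    CorrList G ds → CorrList G ds' → ds = ds'
  | [], _, _, CorrList.nil, CorrList.nil => rfl
  | .inl _ :: _, _, _, CorrList.consFm h, CorrList.consFm h' => by
      rw [uniqR_list h h']
  | .inr _ :: _, _, _, CorrList.consTr hc _ h, CorrList.consTr hc' _ h' => by
      rw [uniqR hc hc', uniqR_list h h']
end

end CorrAux

theorem corr_one_to_one {α : Type*} (R : List α → List α → α → Prop) :
    (∀ d : GDeriv R, ∃! t : GTree α, Corr t d.tree) ∧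
    (∀ t : GTree α, ∀ d d' : GDeriv R, Corr t d.tree → Corr t d'.tree → d = d') := by
  constructor
  · intro d
    exact ⟨CorrAux.toG d.tree, CorrAux.corr_toG d.tree d.nonleaf,
      fun t ht => CorrAux.uniqL ht (CorrAux.corr_toG d.tree d.nonleaf)⟩
  · intro t d d' h h'
    obtain ⟨tr, v, nl⟩ := d
    obtain ⟨tr', v', nl'⟩ := d'
    have := CorrAux.uniqR h h'
    simp_all
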